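/- Let 1 ≤ k ≤ n and let Φ be the conditional pigeon-hole encoding of y → (x_1 + ⋯ + x_n ≥ k), consisting of: for 1 ≤ i ≤ k the clause (¬y ∨ p_{i,1} ∨ ⋯ ∨ p_{i,n−k+1}); for 1 ≤ i ≤ k and 1 ≤ j ≤ n−k+1 the clause (x_{i+j−1} ∨ ¬p_{i,j}); and for 1 ≤ i < k and 1 ≤ j < n−k+1 the clause (¬p_{i+1,j} ∨ p_{i,1} ∨ ⋯ ∨ p_{i,j}). Then assigning y to true and any n−k distinct variables among x_1, …, x_n to false makes unit propagation derive x_j from the restricted formula for every remaining index j. -/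

import Mathlib

abbrev Lit (V : Type) := V × Bool
abbrev Clause (V : Type) := Finset (Lit V)
abbrev CnfForm (V : Type) := Finset (Clause V)

variable {V : Type} [DecidableEq V]

/-- Restriction Φ|_ρ : remove clauses containing a literal of ρ, and delete from the
remaining clauses every literal whose complement is in ρ. -/
def restrict (Φ : CnfForm V) (ρ : Finset (Lit V)) : CnfForm V :=
  (Φ.filter fun c => ∀ l ∈ ρ, l ∉ c).image fun c => c.filter fun l => (l.1, !l.2) ∉ ρ

/-- Unit propagation derives the literal `l` from `Φ` : repeatedly assigning the
literals of unit clauses true and simplifying eventually produces the unit clause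
`{l}` or the empty clause. -/
inductive UPDerives : CnfForm V → Lit V → Prop
  | unit {Φ : CnfForm V} {l : Lit V} : ({l} : Clause V) ∈ Φ → UPDerives Φ l
  | bot {Φ : CnfForm V} {l : Lit V} : (∅ : Clause V) ∈ Φ → UPDerives Φ l
  | step {Φ : CnfForm V} {l : Lit V} (m : Lit V) : ({m} : Clause V) ∈ Φ →
      UPDerives (restrict Φ {m}) l → UPDerives Φ l

/-- Unit propagation derives the empty clause from `Φ`, i.e. `Φ* = ⊥`. -/
inductive UPEmpty : CnfForm V → Prop
  | bot {Φ : CnfForm V} : (∅ : Clause V) ∈ Φ → UPEmpty Φ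
  | step {Φ : CnfForm V} (m : Lit V) : ({m} : Clause V) ∈ Φ → UPEmpty (restrict Φ {m}) → UPEmpty Φ

/-- `UPReach Φ Ψ` : the formula `Ψ` is obtained from `Φ` by a sequence of
unit-propagation steps. -/
inductive UPReach : CnfForm V → CnfForm V → Prop
  | refl (Φ : CnfForm V) : UPReach Φ Φ
  | step {Φ Ψ : CnfForm V} (m : Lit V) : UPReach Φ Ψ → ({m} : Clause V) ∈ Ψ →
      UPReach Φ (restrict Ψ {m})

/-- The set of variables occurring in `Φ`. -/
def varsOf (Φ : CnfForm V) : Finset V := Φ.biUnion fun c => c.image Prod.fst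

/-- A Horn formula: every clause contains at most one positive literal. -/
def IsHorn (Φ : CnfForm V) : Prop := ∀ c ∈ Φ, (c.filter fun l => l.2 = true).card ≤ 1

/-- `Φ⁻` : the negative clauses of `Φ` (no positive literal). -/
def negClauses (Φ : CnfForm V) : CnfForm V := Φ.filter fun c => ∀ l ∈ c, l.2 = false

/-- `Φ⁺` : the clauses of `Φ` with exactly one positive literal. -/
def posPart (Φ : CnfForm V) : CnfForm V :=
  Φ.filter fun c => (c.filter fun l => l.2 = true).card = 1

/-- The conditional pigeon-hole encoding of `y → (x_1 + ⋯ + x_n ≥ k)`: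
for `1 ≤ i ≤ k` the clause `(¬y ∨ p_{i,1} ∨ ⋯ ∨ p_{i,n-k+1})`;
for `1 ≤ i ≤ k`, `1 ≤ j ≤ n-k+1` the clause `(x_{i+j-1} ∨ ¬p_{i,j})`;
for `1 ≤ i < k`, `1 ≤ j < n-k+1` the clause `(¬p_{i+1,j} ∨ p_{i,1} ∨ ⋯ ∨ p_{i,j})`. -/
def phpCond (n k : ℕ) (x : ℕ → V) (p : ℕ → ℕ → V) (y : V) : CnfForm V :=
  ((Finset.Icc 1 k).image fun i =>
      insert ((y, false) : Lit V)
        ((Finset.Icc 1 (n - k + 1)).image fun j => ((p i j, true) : Lit V)))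
  ∪ ((Finset.Icc 1 k ×ˢ Finset.Icc 1 (n - k + 1)).image fun q =>
      ({(x (q.1 + q.2 - 1), true), (p q.1 q.2, false)} : Clause V))
  ∪ ((Finset.Icc 1 (k - 1) ×ˢ Finset.Icc 1 (n - k)).image fun q =>
      insert ((p (q.1 + 1) q.2, false) : Lit V)
        ((Finset.Icc 1 q.2).image fun l => ((p q.1 l, true) : Lit V)))

section Engine
variable {V : Type} [DecidableEq V]

lemma mem_restrict {Φ : CnfForm V} {ρ : Finset (Lit V)} {c' : Clause V} :
    c' ∈ restrict Φ ρ ↔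
      ∃ c ∈ Φ, (∀ l ∈ ρ, l ∉ c) ∧ c' = (c.filter fun l => (l.1, !l.2) ∉ ρ) := by
  simp only [restrict, Finset.mem_image, Finset.mem_filter]
  constructor
  · rintro ⟨c, ⟨h1, h2⟩, h3⟩; exact ⟨c, h1, h2, h3.symm⟩
  · rintro ⟨c, h1, h2, h3⟩; exact ⟨c, ⟨h1, h2⟩, h3.symm⟩

lemma restrict_restrict {Φ : CnfForm V} {ρ : Finset (Lit V)} {m : Lit V}
    (h : ∀ l ∈ ρ, l.1 ≠ m.1) :
    restrict (restrict Φ ρ) {m} = restrict Φ (insert m ρ) := by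
  have hmρ : (m.1, !m.2) ∉ ρ := fun hc => h _ hc rfl
  ext c'
  rw [mem_restrict, mem_restrict]
  constructor
  · rintro ⟨c'', hc'', hm, rfl⟩
    rw [mem_restrict] at hc''
    obtain ⟨c, hc, hs, rfl⟩ := hc''
    refine ⟨c, hc, ?_, ?_⟩
    · intro l hl hlc
      rcases Finset.mem_insert.1 hl with heq | hl'
      · exact hm m (Finset.mem_singleton_self m) (Finset.mem_filter.2 ⟨heq ▸ hlc, hmρ⟩)
      · exact hs l hl' hlc
    · rw [Finset.filter_filter]
      apply Finset.filter_congr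
      intro l _
      simp only [Finset.mem_singleton, Finset.mem_insert]
      tauto
  · rintro ⟨c, hc, hs, rfl⟩
    refine ⟨c.filter fun l => (l.1, !l.2) ∉ ρ, ?_, ?_, ?_⟩
    · rw [mem_restrict]
      exact ⟨c, hc, fun l hl => hs l (Finset.mem_insert_of_mem hl), rfl⟩
    · intro l hl hlc
      exact hs m (Finset.mem_insert_self m ρ)
        ((Finset.mem_singleton.1 hl) ▸ (Finset.mem_filter.1 hlc).1)
    · rw [Finset.filter_filter]
      apply Finset.filter_congr
      intro l _
      simp only [Finset.mem_singleton, Finset.mem_insert]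
      tauto

lemma chain (Φ0 : CnfForm V) (tgt : Lit V) :
    ∀ (L : List (Lit V)) (ρ : Finset (Lit V)),
      (∀ m ∈ L, ∀ l ∈ ρ, l.1 ≠ m.1) → (L.map Prod.fst).Nodup →
      (∀ pre m post, L = pre ++ m :: post →
        ({m} : Clause V) ∈ restrict Φ0 (ρ ∪ pre.toFinset)) →
      ({tgt} : Clause V) ∈ restrict Φ0 (ρ ∪ L.toFinset) →
      UPDerives (restrict Φ0 ρ) tgt
  | [], ρ, _, _, _, htgt => by
      apply UPDerives.unit
      simpa using htgt
  | m :: L', ρ, hfresh, hnd, hmem, htgt => by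
      have h0 : ({m} : Clause V) ∈ restrict Φ0 ρ := by
        have := hmem [] m L' rfl
        simpa using this
      apply UPDerives.step m h0
      rw [restrict_restrict (fun l hl => hfresh m List.mem_cons_self l hl)]
      have hfresh' : ∀ m' ∈ L', ∀ l ∈ insert m ρ, l.1 ≠ m'.1 := by
        intro m' hm' l hl
        rcases Finset.mem_insert.1 hl with rfl | hl
        · simp only [List.map_cons, List.nodup_cons] at hnd
          intro he
          exact hnd.1 (he ▸ List.mem_map_of_mem (f := Prod.fst) hm')
        · exact hfresh m' (List.mem_cons_of_mem m hm') l hl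
      have hnd' : (L'.map Prod.fst).Nodup := by
        simp only [List.map_cons, List.nodup_cons] at hnd; exact hnd.2
      apply chain Φ0 tgt L' (insert m ρ) hfresh' hnd'
      · intro pre m' post hsplit
        have := hmem (m :: pre) m' post (by rw [hsplit]; rfl)
        have hset : ρ ∪ (m :: pre).toFinset = insert m ρ ∪ pre.toFinset := by
          ext l; simp [List.toFinset_cons]; try tauto
        rwa [hset] at this
      · have hset : ρ ∪ (m :: L').toFinset = insert m ρ ∪ L'.toFinset := by
          ext l; simp [List.toFinset_cons]; try tauto
        rwa [hset] at htgt

end Engine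

/-- For the conditional pigeon-hole encoding of `y → (Σ x_i ≥ k)`,
assigning `y` to true and any `n - k` distinct variables `x_i` to false makes unit
propagation derive `x_j` from the restricted formula for every remaining index `j`. -/
theorem stmt10 {V : Type} [DecidableEq V] (n k : ℕ) (hk : 1 ≤ k) (hkn : k ≤ n)
    (x : ℕ → V) (p : ℕ → ℕ → V) (y : V)
    (hx : ∀ i ∈ Finset.Icc 1 n, ∀ j ∈ Finset.Icc 1 n, x i = x j → i = j)
    (hpinj : ∀ i ∈ Finset.Icc 1 k, ∀ j ∈ Finset.Icc 1 (n - k + 1),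
      ∀ i' ∈ Finset.Icc 1 k, ∀ j' ∈ Finset.Icc 1 (n - k + 1),
        p i j = p i' j' → i = i' ∧ j = j')
    (hxp : ∀ l ∈ Finset.Icc 1 n, ∀ i ∈ Finset.Icc 1 k, ∀ j ∈ Finset.Icc 1 (n - k + 1),
      x l ≠ p i j)
    (hxy : ∀ i ∈ Finset.Icc 1 n, x i ≠ y)
    (hpy : ∀ i ∈ Finset.Icc 1 k, ∀ j ∈ Finset.Icc 1 (n - k + 1), p i j ≠ y)
    (T : Finset ℕ) (hT : T ⊆ Finset.Icc 1 n) (hTcard : T.card = n - k) :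
    ∀ j ∈ Finset.Icc 1 n, j ∉ T →
      UPDerives (restrict (phpCond n k x p y)
          (insert ((y, true) : Lit V) (T.image fun i => ((x i, false) : Lit V))))
        (x j, true) := by
  classical
  intro j hj hjT
  rw [Finset.mem_Icc] at hj
  set w := n - k + 1 with hw
  set Φ0 := phpCond n k x p y with hΦ0
  set ρ0 : Finset (Lit V) := insert ((y, true) : Lit V) (T.image fun i => ((x i, false) : Lit V)) with hρ0
  set S : Finset ℕ := Finset.Icc 1 n \ T with hS
  have hTsub : ∀ t ∈ T, 1 ≤ t ∧ t ≤ n := by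
    intro t ht; have := hT ht; rw [Finset.mem_Icc] at this; exact this
  have hScard : S.card = k := by
    rw [hS, Finset.card_sdiff_of_subset (by intro t ht; exact hT ht), Nat.card_Icc]; omega
  -- the increasing enumeration of S
  obtain ⟨σ, hσS, hσmono, hσsurj⟩ :
      ∃ σ : ℕ → ℕ, (∀ i, 1 ≤ i → i ≤ k → σ i ∈ S) ∧
        (∀ i i', 1 ≤ i → i < i' → i' ≤ k → σ i < σ i') ∧
        (∀ v ∈ S, ∃ i, 1 ≤ i ∧ i ≤ k ∧ v = σ i) := by
    refine ⟨fun i => if h : i - 1 < k then S.orderEmbOfFin hScard ⟨i - 1, h⟩ else n + 1,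
      ?_, ?_, ?_⟩
    · intro i h1 h2
      dsimp only
      rw [dif_pos (by omega)]
      exact Finset.orderEmbOfFin_mem S hScard _
    · intro i i' h1 h2 h3
      dsimp only
      rw [dif_pos (show i - 1 < k by omega), dif_pos (show i' - 1 < k by omega)]
      exact (S.orderEmbOfFin hScard).strictMono (by simp [Fin.lt_def]; omega)
    · intro v hv
      have : v ∈ Set.range (S.orderEmbOfFin hScard) := by
        rw [Finset.range_orderEmbOfFin]; exact hv
      obtain ⟨⟨m, hm⟩, rfl⟩ := this
      refine ⟨m + 1, by omega, by omega, ?_⟩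
      dsimp only
      rw [dif_pos (show m + 1 - 1 < k by omega)]
      rfl
  have hSmem : ∀ v, v ∈ S ↔ (1 ≤ v ∧ v ≤ n ∧ v ∉ T) := by
    intro v; rw [hS, Finset.mem_sdiff, Finset.mem_Icc]; tauto
  have hσadd : ∀ d i, 1 ≤ i → i + d ≤ k → σ i + d ≤ σ (i + d) := by
    intro d
    induction d with
    | zero => intro i _ _; simp
    | succ d ih =>
        intro i h1 h2
        have h3 := ih i h1 (by omega)
        have h4 := hσmono (i + d) (i + d + 1) (by omega) (by omega) (by omega)
        have h5 : i + (d + 1) = i + d + 1 := rfl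
        rw [h5]
        omega
  have hσge : ∀ i, 1 ≤ i → i ≤ k → i ≤ σ i := by
    intro i h1 h2
    have h3 := hσadd (i - 1) 1 (by omega) (by omega)
    have h4 := (hSmem (σ 1)).1 (hσS 1 (by omega) (by omega))
    have : 1 + (i - 1) = i := by omega
    rw [this] at h3
    omega
  have hσle : ∀ i, 1 ≤ i → i ≤ k → σ i ≤ n - k + i := by
    intro i h1 h2
    have h3 := hσadd (k - i) i h1 (by omega)
    have : i + (k - i) = k := by omega
    rw [this] at h3
    have h4 := (hSmem (σ k)).1 (hσS k (by omega) (by omega))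
    omega
  -- the target index
  obtain ⟨i0, hi01, hi0k, hji0⟩ := hσsurj j ((hSmem j).2 ⟨hj.1, hj.2, hjT⟩)
  -- negative pairs
  set grid : Finset (ℕ × ℕ) := Finset.Icc 1 k ×ˢ Finset.Icc 1 w with hgrid
  set N : Finset (ℕ × ℕ) :=
    grid.filter (fun q => q.1 + q.2 - 1 ∈ T ∨ q.1 + q.2 - 1 < σ q.1) with hN
  have hNgrid : ∀ q ∈ N, (1 ≤ q.1 ∧ q.1 ≤ k) ∧ (1 ≤ q.2 ∧ q.2 ≤ w) := by
    intro q hq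
    rw [hN, Finset.mem_filter, hgrid, Finset.mem_product, Finset.mem_Icc, Finset.mem_Icc] at hq
    exact hq.1
  have hmemN : ∀ q, q ∈ N ↔ ((1 ≤ q.1 ∧ q.1 ≤ k) ∧ (1 ≤ q.2 ∧ q.2 ≤ w) ∧
      (q.1 + q.2 - 1 ∈ T ∨ q.1 + q.2 - 1 < σ q.1)) := by
    intro q
    rw [hN, Finset.mem_filter, hgrid, Finset.mem_product, Finset.mem_Icc, Finset.mem_Icc]
    tauto
  have hjiN : ∀ i, 1 ≤ i → i ≤ k → (i, σ i - i + 1) ∉ N := by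
    intro i h1 h2 hc
    rw [hmemN] at hc
    dsimp only at hc
    have h3 := hσge i h1 h2
    have h4 : i + (σ i - i + 1) - 1 = σ i := by omega
    rw [h4] at hc
    have h5 := (hSmem (σ i)).1 (hσS i h1 h2)
    rcases hc.2.2 with h6 | h6
    · exact h5.2.2 h6
    · omega
  -- literal makers
  set negf : ℕ × ℕ → Lit V := fun q => (p q.1 q.2, false) with hnegf
  set posf : ℕ → Lit V := fun i => (p i (σ i - i + 1), true) with hposf
  -- the list of negative units
  set LN : List (ℕ × ℕ) := (List.range (k + 1)).flatMap
    (fun i => (((Finset.Icc 1 w).filter (fun l => (i, l) ∈ N)).sort (· ≤ ·)).map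
      (fun l => (i, l))) with hLN
  have hLNmem : ∀ q, q ∈ LN ↔ q ∈ N := by
    intro q
    rw [hLN]
    simp only [List.mem_flatMap, List.mem_range, List.mem_map, Finset.mem_sort,
      Finset.mem_filter, Finset.mem_Icc]
    constructor
    · rintro ⟨i, _, l, ⟨_, hl⟩, rfl⟩; exact hl
    · intro hq
      have h1 := hNgrid q hq
      exact ⟨q.1, by omega, q.2, ⟨⟨h1.2.1, h1.2.2⟩, by rwa [Prod.mk.eta]⟩, Prod.mk.eta⟩
  have hLNpw : LN.Pairwise (fun q q' => q.1 < q'.1 ∨ (q.1 = q'.1 ∧ q.2 < q'.2)) := by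
    rw [hLN, List.pairwise_flatMap]
    constructor
    · intro i _
      rw [List.pairwise_map]
      apply List.Pairwise.imp ?_ (Finset.sortedLT_sort _).pairwise
      intro a b hab
      right; exact ⟨rfl, hab⟩
    · apply List.Pairwise.imp ?_ (List.pairwise_lt_range (n := k+1))
      intro a b hab q hq q' hq'
      simp only [List.mem_map] at hq hq'
      obtain ⟨l, _, rfl⟩ := hq
      obtain ⟨l', _, rfl⟩ := hq'
      left; exact hab
  have hLNnodup : LN.Nodup := hLNpw.imp (fun h => by rintro rfl; omega)
  -- the list of positive units
  set LP : List ℕ := (List.range (k + 1 - i0)).map (fun t => k - t) with hLP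
  have hLPmem : ∀ i, i ∈ LP ↔ (i0 ≤ i ∧ i ≤ k) := by
    intro i
    rw [hLP]
    simp only [List.mem_map, List.mem_range]
    constructor
    · rintro ⟨t, ht, rfl⟩; omega
    · intro hi; exact ⟨k - i, by omega, by omega⟩
  have hLPpw : LP.Pairwise (fun i i' => i' < i) := by
    rw [hLP, List.pairwise_map]
    apply List.Pairwise.imp_of_mem ?_ (List.pairwise_lt_range (n := k + 1 - i0))
    intro a b ha hb hab
    rw [List.mem_range] at ha hb
    omega
  set L : List (Lit V) := LN.map negf ++ LP.map posf with hL
  -- arithmetic helpers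
  have hji1 : ∀ i, 1 ≤ σ i - i + 1 := by intro i; omega
  have hjiw : ∀ i, 1 ≤ i → i ≤ k → σ i - i + 1 ≤ w := by
    intro i h1 h2
    have h3 := hσle i h1 h2
    have h4 := hσge i h1 h2
    omega
  have hσslot : ∀ i, 1 ≤ i → i ≤ k → i + (σ i - i + 1) - 1 = σ i := by
    intro i h1 h2
    have h3 := hσge i h1 h2
    omega
  have hpinj' : ∀ i l i' l', 1 ≤ i → i ≤ k → 1 ≤ l → l ≤ w → 1 ≤ i' → i' ≤ k →
      1 ≤ l' → l' ≤ w → p i l = p i' l' → i = i' ∧ l = l' := by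
    intro i l i' l' a1 a2 a3 a4 a5 a6 a7 a8 h
    exact hpinj i (Finset.mem_Icc.2 ⟨a1, a2⟩) l (Finset.mem_Icc.2 ⟨a3, a4⟩)
      i' (Finset.mem_Icc.2 ⟨a5, a6⟩) l' (Finset.mem_Icc.2 ⟨a7, a8⟩) h
  have hxp' : ∀ t i l, 1 ≤ t → t ≤ n → 1 ≤ i → i ≤ k → 1 ≤ l → l ≤ w → x t ≠ p i l := by
    intro t i l a1 a2 a3 a4 a5 a6
    exact hxp t (Finset.mem_Icc.2 ⟨a1, a2⟩) i (Finset.mem_Icc.2 ⟨a3, a4⟩)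
      l (Finset.mem_Icc.2 ⟨a5, a6⟩)
  have hpy' : ∀ i l, 1 ≤ i → i ≤ k → 1 ≤ l → l ≤ w → p i l ≠ y := by
    intro i l a1 a2 a3 a4
    exact hpy i (Finset.mem_Icc.2 ⟨a1, a2⟩) l (Finset.mem_Icc.2 ⟨a3, a4⟩)
  have hxy' : ∀ t, 1 ≤ t → t ≤ n → x t ≠ y := by
    intro t a1 a2; exact hxy t (Finset.mem_Icc.2 ⟨a1, a2⟩)
  -- membership shape of the accumulated assignment
  have hρ_mem : ∀ (A : Finset (ℕ × ℕ)) (P : Finset ℕ) (lit : Lit V),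
      lit ∈ ρ0 ∪ A.image negf ∪ P.image posf ↔
        (lit = ((y, true) : Lit V) ∨ (∃ t ∈ T, ((x t, false) : Lit V) = lit) ∨
          (∃ q ∈ A, negf q = lit) ∨ (∃ i ∈ P, posf i = lit)) := by
    intro A P lit
    simp only [Finset.mem_union, hρ0, Finset.mem_insert, Finset.mem_image]
    rw [or_assoc, or_assoc]
  -- bounds bundle
  have hAPb : ∀ (A : Finset (ℕ × ℕ)), A ⊆ N → ∀ q ∈ A, (1 ≤ q.1 ∧ q.1 ≤ k) ∧ 1 ≤ q.2 ∧ q.2 ≤ w := by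
    intro A hA q hq; exact hNgrid q (hA hq)
  -- characterizations
  have hρ_y : ∀ (A : Finset (ℕ × ℕ)) (P : Finset ℕ) (b : Bool), A ⊆ N →
      (∀ i ∈ P, 1 ≤ i ∧ i ≤ k) →
      (((y, b) : Lit V) ∈ ρ0 ∪ A.image negf ∪ P.image posf ↔ b = true) := by
    intro A P b hA hP
    rw [hρ_mem]
    constructor
    · rintro (h | ⟨t, ht, h⟩ | ⟨q, hq, h⟩ | ⟨i, hi, h⟩)
      · rw [Prod.mk.injEq] at h; exact h.2
      · rw [Prod.mk.injEq] at h
        exact absurd h.1 (hxy' t (hTsub t ht).1 (hTsub t ht).2)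
      · rw [hnegf, Prod.mk.injEq] at h
        have hb := hAPb A hA q hq
        exact absurd h.1 (hpy' q.1 q.2 hb.1.1 hb.1.2 hb.2.1 hb.2.2)
      · rw [hposf, Prod.mk.injEq] at h
        have hb := hP i hi
        exact absurd h.1 (hpy' i _ hb.1 hb.2 (hji1 i) (hjiw i hb.1 hb.2))
    · rintro rfl; exact Or.inl rfl
  have hρ_x : ∀ (A : Finset (ℕ × ℕ)) (P : Finset ℕ) (t : ℕ) (b : Bool), A ⊆ N →
      (∀ i ∈ P, 1 ≤ i ∧ i ≤ k) → 1 ≤ t → t ≤ n →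
      (((x t, b) : Lit V) ∈ ρ0 ∪ A.image negf ∪ P.image posf ↔ (b = false ∧ t ∈ T)) := by
    intro A P t b hA hP ht1 ht2
    rw [hρ_mem]
    constructor
    · rintro (h | ⟨t', ht', h⟩ | ⟨q, hq, h⟩ | ⟨i, hi, h⟩)
      · rw [Prod.mk.injEq] at h; exact absurd h.1 (hxy' t ht1 ht2)
      · rw [Prod.mk.injEq] at h
        have := hx t' (hT ht') t (Finset.mem_Icc.2 ⟨ht1, ht2⟩) h.1
        exact ⟨h.2.symm, this ▸ ht'⟩
      · rw [hnegf, Prod.mk.injEq] at h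
        have hb := hAPb A hA q hq
        exact absurd h.1.symm (hxp' t q.1 q.2 ht1 ht2 hb.1.1 hb.1.2 hb.2.1 hb.2.2)
      · rw [hposf, Prod.mk.injEq] at h
        have hb := hP i hi
        exact absurd h.1.symm (hxp' t i _ ht1 ht2 hb.1 hb.2 (hji1 i) (hjiw i hb.1 hb.2))
    · rintro ⟨rfl, ht⟩; exact Or.inr (Or.inl ⟨t, ht, rfl⟩)
  have hρ_pf : ∀ (A : Finset (ℕ × ℕ)) (P : Finset ℕ) (i l : ℕ), A ⊆ N →
      (∀ i ∈ P, 1 ≤ i ∧ i ≤ k) → 1 ≤ i → i ≤ k → 1 ≤ l → l ≤ w →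
      (((p i l, false) : Lit V) ∈ ρ0 ∪ A.image negf ∪ P.image posf ↔ (i, l) ∈ A) := by
    intro A P i l hA hP h1 h2 h3 h4
    rw [hρ_mem]
    constructor
    · rintro (h | ⟨t, ht, h⟩ | ⟨q, hq, h⟩ | ⟨i', hi', h⟩)
      · rw [Prod.mk.injEq] at h; exact absurd h.2 (by simp)
      · rw [Prod.mk.injEq] at h
        exact absurd h.1 (hxp' t i l (hTsub t ht).1 (hTsub t ht).2 h1 h2 h3 h4)
      · rw [hnegf, Prod.mk.injEq] at h
        have hb := hAPb A hA q hq
        have := hpinj' q.1 q.2 i l hb.1.1 hb.1.2 hb.2.1 hb.2.2 h1 h2 h3 h4 h.1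
        have hq' : q = (i, l) := Prod.ext this.1 this.2
        exact hq' ▸ hq
      · rw [hposf, Prod.mk.injEq] at h; exact absurd h.2 (by simp)
    · intro h
      exact Or.inr (Or.inr (Or.inl ⟨(i, l), h, rfl⟩))
  have hρ_pt : ∀ (A : Finset (ℕ × ℕ)) (P : Finset ℕ) (i l : ℕ), A ⊆ N →
      (∀ i ∈ P, 1 ≤ i ∧ i ≤ k) → 1 ≤ i → i ≤ k → 1 ≤ l → l ≤ w →
      (((p i l, true) : Lit V) ∈ ρ0 ∪ A.image negf ∪ P.image posf ↔
        (i ∈ P ∧ l = σ i - i + 1)) := by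
    intro A P i l hA hP h1 h2 h3 h4
    rw [hρ_mem]
    constructor
    · rintro (h | ⟨t, ht, h⟩ | ⟨q, hq, h⟩ | ⟨i', hi', h⟩)
      · rw [Prod.mk.injEq] at h
        exact absurd h.1 (hpy' i l h1 h2 h3 h4)
      · rw [Prod.mk.injEq] at h; exact absurd h.2 (by simp)
      · rw [hnegf, Prod.mk.injEq] at h; exact absurd h.2 (by simp)
      · rw [hposf, Prod.mk.injEq] at h
        have hb := hP i' hi'
        have h5 := hpinj' i' _ i l hb.1 hb.2 (hji1 i') (hjiw i' hb.1 hb.2) h1 h2 h3 h4 h.1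
        obtain ⟨rfl, h6⟩ := h5
        exact ⟨hi', h6.symm⟩
    · rintro ⟨hi, rfl⟩
      exact Or.inr (Or.inr (Or.inr ⟨i, hi, rfl⟩))
  -- clauses of the formula
  have hrow : ∀ i, 1 ≤ i → i ≤ k →
      (insert ((y, false) : Lit V) ((Finset.Icc 1 w).image fun l => ((p i l, true) : Lit V))) ∈ Φ0 := by
    intro i h1 h2
    rw [hΦ0]
    unfold phpCond
    rw [← hw]
    apply Finset.mem_union_left
    apply Finset.mem_union_left
    exact Finset.mem_image.2 ⟨i, Finset.mem_Icc.2 ⟨h1, h2⟩, rfl⟩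
  have hbin : ∀ i l, 1 ≤ i → i ≤ k → 1 ≤ l → l ≤ w →
      ({((x (i + l - 1), true) : Lit V), ((p i l, false) : Lit V)} : Clause V) ∈ Φ0 := by
    intro i l h1 h2 h3 h4
    rw [hΦ0]
    unfold phpCond
    rw [← hw]
    apply Finset.mem_union_left
    apply Finset.mem_union_right
    exact Finset.mem_image.2 ⟨(i, l), Finset.mem_product.2
      ⟨Finset.mem_Icc.2 ⟨h1, h2⟩, Finset.mem_Icc.2 ⟨h3, h4⟩⟩, rfl⟩
  have htrans : ∀ i l, 2 ≤ i → i ≤ k → 1 ≤ l → l ≤ n - k →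
      (insert ((p i l, false) : Lit V)
        ((Finset.Icc 1 l).image fun l' => ((p (i - 1) l', true) : Lit V))) ∈ Φ0 := by
    intro i l h1 h2 h3 h4
    rw [hΦ0]
    unfold phpCond
    apply Finset.mem_union_right
    refine Finset.mem_image.2 ⟨(i - 1, l), Finset.mem_product.2
      ⟨Finset.mem_Icc.2 ⟨by omega, by omega⟩, Finset.mem_Icc.2 ⟨h3, h4⟩⟩, ?_⟩
    have h5 : i - 1 + 1 = i := by omega
    rw [h5]
  -- membership of negative units
  have hNEG : ∀ (A : Finset (ℕ × ℕ)) (q : ℕ × ℕ), q ∈ N → A ⊆ N → q ∉ A →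
      (∀ q' ∈ N, q'.1 < q.1 → q' ∈ A) →
      ({negf q} : Clause V) ∈ restrict Φ0 (ρ0 ∪ A.image negf ∪ (∅ : Finset ℕ).image posf) := by
    intro A q hqN hA hqA hbelow
    obtain ⟨i, l⟩ := q
    have hb := hNgrid (i, l) hqN
    dsimp only at hb
    have hPemp : ∀ i' ∈ (∅ : Finset ℕ), 1 ≤ i' ∧ i' ≤ k := by simp
    rw [mem_restrict]
    by_cases hslot : i + l - 1 ∈ T
    · refine ⟨_, hbin i l hb.1.1 hb.1.2 hb.2.1 hb.2.2, ?_, ?_⟩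
      · intro lit hlit hlitc
        rcases Finset.mem_insert.1 hlitc with rfl | hlitc
        · rw [hρ_x A ∅ (i + l - 1) true hA hPemp (by omega) (by omega)] at hlit
          simp at hlit
        · rw [Finset.mem_singleton] at hlitc
          subst hlitc
          rw [hρ_pf A ∅ i l hA hPemp hb.1.1 hb.1.2 hb.2.1 hb.2.2] at hlit
          exact hqA hlit
      · apply Finset.ext
        intro lit
        simp only [Finset.mem_singleton, Finset.mem_filter, Finset.mem_insert, hnegf]
        constructor
        · rintro rfl
          refine ⟨Or.inr rfl, ?_⟩
          show ((p i l, true) : Lit V) ∉ _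
          rw [hρ_pt A ∅ i l hA hPemp hb.1.1 hb.1.2 hb.2.1 hb.2.2]
          simp
        · rintro ⟨rfl | hlit, hpred⟩
          · exfalso
            apply hpred
            show ((x (i + l - 1), false) : Lit V) ∈ _
            rw [hρ_x A ∅ (i + l - 1) false hA hPemp (by omega) (by omega)]
            exact ⟨rfl, hslot⟩
          · exact hlit
    · -- cascaded unit from a transitivity clause
      have h5 := (hmemN (i, l)).1 hqN
      dsimp only at h5
      have hslot' : i + l - 1 < σ i := by tauto
      have hsS : i + l - 1 ∈ S := (hSmem _).2 ⟨by omega, by omega, hslot⟩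
      obtain ⟨m, hm1, hm2, hm3⟩ := hσsurj _ hsS
      have hmi : m < i := by
        by_contra hmi
        rcases Nat.eq_or_lt_of_le (not_lt.1 hmi) with he | hlt
        · rw [he] at hslot'; omega
        · have := hσmono i m hb.1.1 hlt hm2
          omega
      have hi2 : 2 ≤ i := by omega
      have hsle : i + l - 1 ≤ σ (i - 1) := by
        rcases Nat.eq_or_lt_of_le (show m ≤ i - 1 by omega) with he | hlt
        · rw [← he]; omega
        · have := hσmono m (i - 1) hm1 hlt (by omega)
          omega
      have hlnk : l ≤ n - k := by
        have := hσle (i - 1) (by omega) (by omega)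
        omega
      refine ⟨_, htrans i l hi2 hb.1.2 hb.2.1 hlnk, ?_, ?_⟩
      · intro lit hlit hlitc
        rcases Finset.mem_insert.1 hlitc with rfl | hlitc
        · rw [hρ_pf A ∅ i l hA hPemp hb.1.1 hb.1.2 hb.2.1 hb.2.2] at hlit
          exact hqA hlit
        · obtain ⟨l', hl', rfl⟩ := Finset.mem_image.1 hlitc
          rw [Finset.mem_Icc] at hl'
          rw [hρ_pt A ∅ (i - 1) l' hA hPemp (by omega) (by omega) hl'.1 (by omega)] at hlit
          simp at hlit
      · apply Finset.ext
        intro lit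
        simp only [Finset.mem_singleton, Finset.mem_filter, Finset.mem_insert, hnegf]
        constructor
        · rintro rfl
          refine ⟨Or.inl rfl, ?_⟩
          show ((p i l, true) : Lit V) ∉ _
          rw [hρ_pt A ∅ i l hA hPemp hb.1.1 hb.1.2 hb.2.1 hb.2.2]
          simp
        · rintro ⟨rfl | hlit, hpred⟩
          · rfl
          · exfalso
            obtain ⟨l', hl', rfl⟩ := Finset.mem_image.1 hlit
            rw [Finset.mem_Icc] at hl'
            apply hpred
            show ((p (i - 1) l', false) : Lit V) ∈ _
            rw [hρ_pf A ∅ (i - 1) l' hA hPemp (by omega) (by omega) hl'.1 (by omega)]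
            apply hbelow (i - 1, l') _ (by omega)
            rw [hmemN]
            refine ⟨⟨by omega, by omega⟩, ⟨hl'.1, by omega⟩, Or.inr ?_⟩
            dsimp only
            omega
  have hPOS : ∀ (P : Finset ℕ) (i : ℕ), 1 ≤ i → i ≤ k →
      (∀ i', i' ∈ P ↔ (i < i' ∧ i' ≤ k)) →
      ({posf i} : Clause V) ∈ restrict Φ0 (ρ0 ∪ N.image negf ∪ P.image posf) := by
    intro P i h1 h2 hPc
    have hP : ∀ i' ∈ P, 1 ≤ i' ∧ i' ≤ k := by
      intro i' h; rw [hPc] at h; omega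
    have hiP : i ∉ P := by rw [hPc]; omega
    rw [mem_restrict]
    by_cases hcase : i = k ∨ σ (i + 1) = n - k + i + 1
    · refine ⟨_, hrow i h1 h2, ?_, ?_⟩
      · intro lit hlit hlitc
        rcases Finset.mem_insert.1 hlitc with rfl | hlitc
        · rw [hρ_y N P false Finset.Subset.rfl hP] at hlit
          simp at hlit
        · obtain ⟨l, hl, rfl⟩ := Finset.mem_image.1 hlitc
          rw [Finset.mem_Icc] at hl
          rw [hρ_pt N P i l Finset.Subset.rfl hP h1 h2 hl.1 hl.2] at hlit
          exact hiP hlit.1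
      · apply Finset.ext
        intro lit
        simp only [Finset.mem_singleton, Finset.mem_filter, Finset.mem_insert,
          Finset.mem_image, hposf]
        constructor
        · rintro rfl
          refine ⟨Or.inr ⟨σ i - i + 1, Finset.mem_Icc.2 ⟨hji1 i, hjiw i h1 h2⟩, rfl⟩, ?_⟩
          show ((p i (σ i - i + 1), false) : Lit V) ∉ _
          rw [hρ_pf N P i _ Finset.Subset.rfl hP h1 h2 (hji1 i) (hjiw i h1 h2)]
          exact hjiN i h1 h2
        · rintro ⟨rfl | ⟨l, hl, rfl⟩, hpred⟩
          · exfalso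
            apply hpred
            show ((y, true) : Lit V) ∈ _
            rw [hρ_y N P true Finset.Subset.rfl hP]
          · rw [Finset.mem_Icc] at hl
            have hnotN : (i, l) ∉ N := by
              intro hc
              apply hpred
              show ((p i l, false) : Lit V) ∈ _
              rw [hρ_pf N P i l Finset.Subset.rfl hP h1 h2 hl.1 hl.2]
              exact hc
            have hnor : ¬(i + l - 1 ∈ T ∨ i + l - 1 < σ i) := by
              intro hor
              exact hnotN ((hmemN (i, l)).2 ⟨⟨h1, h2⟩, ⟨hl.1, hl.2⟩, hor⟩)
            push_neg at hnor
            have hsS : i + l - 1 ∈ S := (hSmem _).2 ⟨by omega, by omega, hnor.1⟩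
            obtain ⟨m, hm1, hm2, hm3⟩ := hσsurj _ hsS
            have hmge : i ≤ m := by
              by_contra hc
              have := hσmono m i hm1 (by omega) h2
              omega
            have hmeq : m = i := by
              rcases hcase with rfl | hσe
              · omega
              · by_contra hc
                have hm4 : i + 1 ≤ m := by omega
                have : σ (i + 1) ≤ σ m := by
                  rcases Nat.eq_or_lt_of_le hm4 with he | hlt
                  · rw [he]
                  · have := hσmono (i + 1) m (by omega) hlt hm2
                    omega
                omega
            rw [hmeq] at hm3
            have hleq : l = σ i - i + 1 := by
              have := hσge i h1 h2
              omega
            rw [hleq]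
    · push_neg at hcase
      have hik : i < k := by
        rcases Nat.eq_or_lt_of_le h2 with he | hlt
        · exact absurd he hcase.1
        · exact hlt
      have hσi1le : σ (i + 1) ≤ n - k + i := by
        have := hσle (i + 1) (by omega) (by omega)
        omega
      have hσi1ge : i + 1 ≤ σ (i + 1) := hσge (i + 1) (by omega) (by omega)
      have hσlt : σ i < σ (i + 1) := hσmono i (i + 1) h1 (by omega) (by omega)
      have hj1 : σ (i + 1) - (i + 1) + 1 ≤ n - k := by omega
      have hc := htrans (i + 1) (σ (i + 1) - (i + 1) + 1) (by omega) (by omega)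
        (hji1 (i + 1)) hj1
      rw [Nat.add_sub_cancel] at hc
      refine ⟨_, hc, ?_, ?_⟩
      · intro lit hlit hlitc
        rcases Finset.mem_insert.1 hlitc with rfl | hlitc
        · rw [hρ_pf N P (i + 1) _ Finset.Subset.rfl hP (by omega) (by omega) (hji1 (i + 1))
            (hjiw (i + 1) (by omega) (by omega))] at hlit
          exact hjiN (i + 1) (by omega) (by omega) hlit
        · obtain ⟨l', hl', rfl⟩ := Finset.mem_image.1 hlitc
          rw [Finset.mem_Icc] at hl'
          have hl'w : l' ≤ w := by
            have := hjiw (i + 1) (by omega) (by omega)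
            omega
          rw [hρ_pt N P i l' Finset.Subset.rfl hP h1 h2 hl'.1 hl'w] at hlit
          exact hiP hlit.1
      · apply Finset.ext
        intro lit
        simp only [Finset.mem_singleton, Finset.mem_filter, Finset.mem_insert,
          Finset.mem_image, hposf]
        constructor
        · rintro rfl
          have hjile : σ i - i + 1 ≤ σ (i + 1) - (i + 1) + 1 := by
            have := hσge i h1 h2
            omega
          refine ⟨Or.inr ⟨σ i - i + 1, Finset.mem_Icc.2 ⟨hji1 i, hjile⟩, rfl⟩, ?_⟩
          show ((p i (σ i - i + 1), false) : Lit V) ∉ _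
          rw [hρ_pf N P i _ Finset.Subset.rfl hP h1 h2 (hji1 i) (hjiw i h1 h2)]
          exact hjiN i h1 h2
        · rintro ⟨rfl | ⟨l, hl, rfl⟩, hpred⟩
          · exfalso
            apply hpred
            show ((p (i + 1) (σ (i + 1) - (i + 1) + 1), true) : Lit V) ∈ _
            rw [hρ_pt N P (i + 1) _ Finset.Subset.rfl hP (by omega) (by omega) (hji1 (i + 1))
              (hjiw (i + 1) (by omega) (by omega))]
            exact ⟨(hPc (i + 1)).2 ⟨by omega, by omega⟩, rfl⟩
          · rw [Finset.mem_Icc] at hl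
            have hlw : l ≤ w := by
              have := hjiw (i + 1) (by omega) (by omega)
              omega
            have hnotN : (i, l) ∉ N := by
              intro hc'
              apply hpred
              show ((p i l, false) : Lit V) ∈ _
              rw [hρ_pf N P i l Finset.Subset.rfl hP h1 h2 hl.1 hlw]
              exact hc'
            have hnor : ¬(i + l - 1 ∈ T ∨ i + l - 1 < σ i) := by
              intro hor
              exact hnotN ((hmemN (i, l)).2 ⟨⟨h1, h2⟩, ⟨hl.1, hlw⟩, hor⟩)
            push_neg at hnor
            have hsS : i + l - 1 ∈ S := (hSmem _).2 ⟨by omega, by omega, hnor.1⟩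
            obtain ⟨m, hm1, hm2, hm3⟩ := hσsurj _ hsS
            have hmge : i ≤ m := by
              by_contra hc'
              have := hσmono m i hm1 (by omega) h2
              omega
            have hmlt : i + l - 1 < σ (i + 1) := by omega
            have hmeq : m = i := by
              by_contra hc'
              have hm4 : i + 1 ≤ m := by omega
              have : σ (i + 1) ≤ σ m := by
                rcases Nat.eq_or_lt_of_le hm4 with he | hlt
                · rw [he]
                · have := hσmono (i + 1) m (by omega) hlt hm2
                  omega
              omega
            rw [hmeq] at hm3
            have hleq : l = σ i - i + 1 := by
              have := hσge i h1 h2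
              omega
            rw [hleq]
  have hσi0S := (hSmem (σ i0)).1 (hσS i0 hi01 hi0k)
  have hFIN : ({((x (σ i0), true) : Lit V)} : Clause V) ∈
      restrict Φ0 (ρ0 ∪ N.image negf ∪ (Finset.Icc i0 k).image posf) := by
    rw [mem_restrict]
    have hPIcc : ∀ i' ∈ Finset.Icc i0 k, 1 ≤ i' ∧ i' ≤ k := by
      intro i' h; rw [Finset.mem_Icc] at h; omega
    have hcl := hbin i0 (σ i0 - i0 + 1) hi01 hi0k (hji1 i0) (hjiw i0 hi01 hi0k)
    rw [hσslot i0 hi01 hi0k] at hcl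
    refine ⟨_, hcl, ?_, ?_⟩
    · intro lit hlit hlitc
      rcases Finset.mem_insert.1 hlitc with rfl | hlitc
      · rw [hρ_x N (Finset.Icc i0 k) (σ i0) true Finset.Subset.rfl hPIcc hσi0S.1 hσi0S.2.1] at hlit
        simp at hlit
      · rw [Finset.mem_singleton] at hlitc
        subst hlitc
        rw [hρ_pf N (Finset.Icc i0 k) i0 _ Finset.Subset.rfl hPIcc hi01 hi0k (hji1 i0)
          (hjiw i0 hi01 hi0k)] at hlit
        exact hjiN i0 hi01 hi0k hlit
    · apply Finset.ext
      intro lit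
      simp only [Finset.mem_singleton, Finset.mem_filter, Finset.mem_insert]
      constructor
      · rintro rfl
        refine ⟨Or.inl rfl, ?_⟩
        show ((x (σ i0), false) : Lit V) ∉ _
        rw [hρ_x N (Finset.Icc i0 k) (σ i0) false Finset.Subset.rfl hPIcc hσi0S.1 hσi0S.2.1]
        intro hcc
        exact hσi0S.2.2 hcc.2
      · rintro ⟨rfl | hlit, hpred⟩
        · rfl
        · exfalso
          apply hpred
          subst hlit
          show ((p i0 (σ i0 - i0 + 1), true) : Lit V) ∈ _
          rw [hρ_pt N (Finset.Icc i0 k) i0 _ Finset.Subset.rfl hPIcc hi01 hi0k (hji1 i0)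
            (hjiw i0 hi01 hi0k)]
          exact ⟨Finset.mem_Icc.2 ⟨le_refl i0, hi0k⟩, rfl⟩
  have hLNfin : LN.toFinset = N := by
    apply Finset.ext
    intro q
    rw [List.mem_toFinset, hLNmem]
  have hmapfin : ∀ (α β : Type) [DecidableEq α] [DecidableEq β] (f : α → β) (l : List α),
      (l.map f).toFinset = l.toFinset.image f := by
    intro α β _ _ f l
    apply Finset.ext
    intro b
    simp
  -- now assemble the chain
  apply chain Φ0 ((x j, true) : Lit V) L ρ0
  · -- freshness
    intro m hm lit hlit
    rw [hL, List.mem_append] at hm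
    have hmvar : ∃ i l, 1 ≤ i ∧ i ≤ k ∧ 1 ≤ l ∧ l ≤ w ∧ m.1 = p i l := by
      rcases hm with hm | hm
      · obtain ⟨q, hq, rfl⟩ := List.mem_map.1 hm
        have hb := hNgrid q ((hLNmem q).1 hq)
        exact ⟨q.1, q.2, hb.1.1, hb.1.2, hb.2.1, hb.2.2, by rw [hnegf]⟩
      · obtain ⟨i, hi, rfl⟩ := List.mem_map.1 hm
        rw [hLPmem] at hi
        exact ⟨i, σ i - i + 1, by omega, hi.2, hji1 i, hjiw i (by omega) hi.2, by rw [hposf]⟩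
    obtain ⟨i, l, a1, a2, a3, a4, hmv⟩ := hmvar
    rw [hmv]
    rw [hρ0] at hlit
    rcases Finset.mem_insert.1 hlit with rfl | hlit
    · exact (hpy' i l a1 a2 a3 a4).symm
    · obtain ⟨t, ht, rfl⟩ := Finset.mem_image.1 hlit
      exact hxp' t i l (hTsub t ht).1 (hTsub t ht).2 a1 a2 a3 a4
  · -- nodup of variables
    have hre : L.map Prod.fst = (LN ++ LP.map (fun i => (i, σ i - i + 1))).map
        (fun q => p q.1 q.2) := by
      rw [hL]
      simp only [List.map_append, List.map_map]
      rfl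
    rw [hre]
    apply List.Nodup.map_on
    · intro q hq q' hq' he
      rw [List.mem_append] at hq hq'
      have hbq : (1 ≤ q.1 ∧ q.1 ≤ k) ∧ 1 ≤ q.2 ∧ q.2 ≤ w := by
        rcases hq with hq | hq
        · exact hNgrid q ((hLNmem q).1 hq)
        · obtain ⟨i, hi, rfl⟩ := List.mem_map.1 hq
          rw [hLPmem] at hi
          exact ⟨⟨by omega, hi.2⟩, hji1 i, hjiw i (by omega) hi.2⟩
      have hbq' : (1 ≤ q'.1 ∧ q'.1 ≤ k) ∧ 1 ≤ q'.2 ∧ q'.2 ≤ w := by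
        rcases hq' with hq' | hq'
        · exact hNgrid q' ((hLNmem q').1 hq')
        · obtain ⟨i, hi, rfl⟩ := List.mem_map.1 hq'
          rw [hLPmem] at hi
          exact ⟨⟨by omega, hi.2⟩, hji1 i, hjiw i (by omega) hi.2⟩
      have := hpinj' q.1 q.2 q'.1 q'.2 hbq.1.1 hbq.1.2 hbq.2.1 hbq.2.2
        hbq'.1.1 hbq'.1.2 hbq'.2.1 hbq'.2.2 he
      exact Prod.ext this.1 this.2
    · rw [List.nodup_append]
      refine ⟨hLNnodup, ?_, ?_⟩
      · apply List.Nodup.map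
        · intro a b he
          exact congrArg Prod.fst he
        · exact hLPpw.imp (fun h => by omega)
      · intro q hq b hq' hqb
        subst hqb
        obtain ⟨i, hi, rfl⟩ := List.mem_map.1 hq'
        rw [hLPmem] at hi
        exact hjiN i (by omega) hi.2 ((hLNmem _).1 hq)
  · -- the step memberships
    intro pre m post hsplit
    rw [hL] at hsplit
    rcases List.append_eq_append_iff.1 hsplit.symm with ⟨a', ha1, ha2⟩ | ⟨c', hc1, hc2⟩
    · -- m inside the negative part, or at the boundary
      cases a' with
      | nil =>
        rw [List.append_nil] at ha1
        rw [List.nil_append] at ha2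
        obtain ⟨i, l₂', hl2, hfi, _⟩ := List.map_eq_cons_iff.1 ha2.symm
        have hiLP : i ∈ LP := by rw [hl2]; simp
        rw [hLPmem] at hiLP
        have hPc : ∀ i', i' ∈ (∅ : Finset ℕ) ↔ (i < i' ∧ i' ≤ k) := by
          intro i'
          simp only [Finset.notMem_empty, false_iff]
          intro hi'
          have h4 : i' ∈ LP := by rw [hLPmem]; omega
          rw [hl2] at h4
          rcases List.mem_cons.1 h4 with rfl | h5
          · omega
          · have hpw := hLPpw
            rw [hl2] at hpw
            have := (List.pairwise_cons.1 hpw).1 i' h5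
            omega
        have hset : ρ0 ∪ pre.toFinset =
            ρ0 ∪ N.image negf ∪ (∅ : Finset ℕ).image posf := by
          rw [← ha1, hmapfin, hLNfin]
          simp
        rw [hset, ← hfi]
        exact hPOS ∅ i (by omega) hiLP.2 hPc
      | cons mc a'' =>
        obtain ⟨hm, hpost⟩ := List.cons_eq_cons.1 ha2
        subst hm
        obtain ⟨l₁, l₂, hLNs, hpre1, hm2⟩ := List.map_eq_append_iff.1 ha1
        obtain ⟨q, l₂'', hl2, hfq, _⟩ := List.map_eq_cons_iff.1 hm2
        have hqLN : q ∈ LN := by rw [hLNs, hl2]; simp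
        have hqN := (hLNmem q).1 hqLN
        have hl1N : l₁.toFinset ⊆ N := by
          intro q' hq'
          rw [List.mem_toFinset] at hq'
          exact (hLNmem q').1 (by rw [hLNs]; exact List.mem_append_left _ hq')
        have hqA : q ∉ l₁.toFinset := by
          rw [List.mem_toFinset]
          have hnd := hLNnodup
          rw [hLNs, hl2, List.nodup_append] at hnd
          intro hc'
          exact hnd.2.2 q hc' q (by simp) rfl
        have hbelow : ∀ q' ∈ N, q'.1 < q.1 → q' ∈ l₁.toFinset := by
          intro q' hq'N hlt
          rw [List.mem_toFinset]
          have hq'LN : q' ∈ LN := (hLNmem q').2 hq'N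
          rw [hLNs, hl2] at hq'LN
          rcases List.mem_append.1 hq'LN with h5 | h5
          · exact h5
          · exfalso
            have hpw := hLNpw
            rw [hLNs, hl2, List.pairwise_append] at hpw
            rcases List.mem_cons.1 h5 with rfl | h5
            · omega
            · rcases (List.pairwise_cons.1 hpw.2.1).1 q' h5 with h | ⟨h, _⟩
              · omega
              · omega
        have hset : ρ0 ∪ pre.toFinset =
            ρ0 ∪ l₁.toFinset.image negf ∪ (∅ : Finset ℕ).image posf := by
          rw [← hpre1, hmapfin]
          simp
        rw [hset, ← hfq]
        exact hNEG l₁.toFinset q hqN hl1N hqA hbelow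
    · -- m inside the positive part
      obtain ⟨l₁, l₂, hLPs, hm1, hm2⟩ := List.map_eq_append_iff.1 hc2
      obtain ⟨i, l₂', hl2, hfi, _⟩ := List.map_eq_cons_iff.1 hm2
      have hiLP : i ∈ LP := by rw [hLPs, hl2]; simp
      rw [hLPmem] at hiLP
      have hPc : ∀ i', i' ∈ l₁.toFinset ↔ (i < i' ∧ i' ≤ k) := by
        intro i'
        rw [List.mem_toFinset]
        have hpw := hLPpw
        rw [hLPs, hl2, List.pairwise_append] at hpw
        constructor
        · intro hi'
          have h3 := hpw.2.2 i' hi' i (by simp)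
          have h4 : i' ∈ LP := by rw [hLPs, hl2]; simp [hi']
          rw [hLPmem] at h4
          exact ⟨h3, h4.2⟩
        · intro hi'
          have h4 : i' ∈ LP := by rw [hLPmem]; omega
          rw [hLPs, hl2] at h4
          rcases List.mem_append.1 h4 with h5 | h5
          · exact h5
          · rcases List.mem_cons.1 h5 with rfl | h5
            · omega
            · have := (List.pairwise_cons.1 hpw.2.1).1 i' h5
              omega
      have hset : ρ0 ∪ pre.toFinset =
          ρ0 ∪ N.image negf ∪ l₁.toFinset.image posf := by
        rw [hc1, List.toFinset_append, ← hm1, hmapfin, hmapfin, hLNfin,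
          ← Finset.union_assoc]
      rw [hset, ← hfi]
      exact hPOS l₁.toFinset i (by omega) hiLP.2 hPc
  · -- the target membership
    have hLPfin : LP.toFinset = Finset.Icc i0 k := by
      apply Finset.ext
      intro i'
      rw [List.mem_toFinset, hLPmem, Finset.mem_Icc]
    have hset : ρ0 ∪ L.toFinset = ρ0 ∪ N.image negf ∪ (Finset.Icc i0 k).image posf := by
      rw [hL, List.toFinset_append, hmapfin, hmapfin, hLNfin, hLPfin, ← Finset.union_assoc]
    rw [hset, hji0]
    exact hFIN
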